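/- arXiv:2112.10140 — 3 statements merged into one kernel-verified Lean document; each statement's English description precedes it below -/
import Mathlib

section
/- Let K be a commutative ℚ-algebra, α ∈ K, A ∈ M_l(K), and set A_k = ∏_{i=0}^{k-1}(A + iα·I) (with A_0 = I). Let F(X) = Σ_{k≥0} A_k X^k/k! ∈ M_l(K)[[X]]. Then for every n ≥ 0, Σ_{i≥0} A_{n+i} X^i/i! = A_n · (1 - αX)^{-n} · F(X) in M_l(K)[[X]], where (1-αX)^{-n} = Σ_{l≥0} binom(n-1+l, l) α^l X^l. -/
open PowerSeries

variable {K : Type*} [CommRing K] [Algebra ℚ K] {l : ℕ}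

/-- `ascProd A α n = ∏_{i=0}^{n-1} (A + i·α·I)`, with `ascProd A α 0 = I`. -/
def ascProd (A : Matrix (Fin l) (Fin l) K) (α : K) : ℕ → Matrix (Fin l) (Fin l) K
  | 0 => 1
  | n + 1 => ascProd A α n * (A + ((n : K) * α) • (1 : Matrix (Fin l) (Fin l) K))

/-- The formal series `(1-αX)^{-n} = Σ_{m≥0} binom(n-1+m, m) α^m X^m`
(as a series of scalar matrices). -/
noncomputable def negPow (α : K) (n : ℕ) : PowerSeries (Matrix (Fin l) (Fin l) K) :=
  PowerSeries.mk fun m =>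
    ((((n + m - 1).choose m : K)) * α ^ m) • (1 : Matrix (Fin l) (Fin l) K)

open Finset in
set_option linter.unusedSectionVars false in
lemma key (A : Matrix (Fin l) (Fin l) K) (α : K) (n : ℕ) : ∀ m : ℕ,
    ascProd A α (n + m) = ∑ j ∈ Finset.range (m + 1),
      (((m.choose j * n.ascFactorial j : ℕ) : K) * α ^ j) •
        (ascProd A α n * ascProd A α (m - j)) := by
  intro m
  induction m with
  | zero => simp [ascProd]
  | succ m ih =>
    have hL : ascProd A α (n + (m + 1))
        = ascProd A α (n + m) * (A + (((n + m : ℕ) : K) * α) • 1) := by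
      rw [← Nat.add_assoc]; rfl
    rw [hL, ih, Finset.sum_mul]
    have hterm : ∀ j ∈ Finset.range (m + 1),
        ((((m.choose j * n.ascFactorial j : ℕ) : K) * α ^ j) •
          (ascProd A α n * ascProd A α (m - j))) * (A + (((n + m : ℕ) : K) * α) • 1)
        = (((m.choose j * n.ascFactorial j : ℕ) : K) * α ^ j) •
            (ascProd A α n * ascProd A α (m + 1 - j))
          + (((m.choose j * n.ascFactorial (j + 1) : ℕ) : K) * α ^ (j + 1)) •
            (ascProd A α n * ascProd A α (m - j)) := by
      intro j hj
      rw [Finset.mem_range, Nat.lt_succ_iff] at hj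
      have h1 : ((n + m : ℕ) : K) * α = ((m - j : ℕ) : K) * α + ((n + j : ℕ) : K) * α := by
        have : (m - j : ℕ) + (n + j) = n + m := by omega
        rw [← add_mul, ← Nat.cast_add, this]
      have h2 : ascProd A α (m - j) * (A + (((m - j : ℕ) : K) * α) • 1)
          = ascProd A α (m + 1 - j) := by
        have : m + 1 - j = (m - j) + 1 := by omega
        rw [this]; rfl
      rw [smul_mul_assoc, h1]
      rw [show A + ((((m - j : ℕ) : K) * α) + (((n + j : ℕ) : K) * α)) • 1
          = (A + (((m - j : ℕ) : K) * α) • 1) + (((n + j : ℕ) : K) * α) • 1 by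
        rw [add_smul]; abel]
      rw [mul_add, mul_smul_one, mul_assoc, h2, smul_add, smul_smul]
      congr 2
      rw [Nat.ascFactorial_succ]
      push_cast
      ring
    rw [Finset.sum_congr rfl hterm, Finset.sum_add_distrib]
    rw [Finset.sum_range_succ' (fun j => ((((m + 1).choose j * n.ascFactorial j : ℕ) : K) * α ^ j) •
      (ascProd A α n * ascProd A α (m + 1 - j)))]
    have hsplit : ∀ j ∈ Finset.range (m + 1),
        ((((m + 1).choose (j + 1) * n.ascFactorial (j + 1) : ℕ) : K) * α ^ (j + 1)) •
          (ascProd A α n * ascProd A α (m + 1 - (j + 1)))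
        = (((m.choose j * n.ascFactorial (j + 1) : ℕ) : K) * α ^ (j + 1)) •
            (ascProd A α n * ascProd A α (m - j))
          + (((m.choose (j + 1) * n.ascFactorial (j + 1) : ℕ) : K) * α ^ (j + 1)) •
            (ascProd A α n * ascProd A α (m - j)) := by
      intro j hj
      have hmj : m + 1 - (j + 1) = m - j := by omega
      rw [hmj, Nat.choose_succ_succ, ← add_smul]
      congr 1
      push_cast
      ring
    rw [Finset.sum_congr rfl hsplit, Finset.sum_add_distrib]
    have hS1 : (∑ j ∈ Finset.range (m + 1),
          (((m.choose j * n.ascFactorial j : ℕ) : K) * α ^ j) •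
            (ascProd A α n * ascProd A α (m + 1 - j)))
        = (∑ j ∈ Finset.range (m + 1),
            (((m.choose (j + 1) * n.ascFactorial (j + 1) : ℕ) : K) * α ^ (j + 1)) •
              (ascProd A α n * ascProd A α (m - j)))
          + ((((m + 1).choose 0 * n.ascFactorial 0 : ℕ) : K) * α ^ 0) •
              (ascProd A α n * ascProd A α (m + 1 - 0)) := by
      rw [Finset.sum_range_succ' (fun j => (((m.choose j * n.ascFactorial j : ℕ) : K) * α ^ j) •
        (ascProd A α n * ascProd A α (m + 1 - j)))]
      rw [Finset.sum_range_succ (fun j => (((m.choose (j + 1) * n.ascFactorial (j + 1) : ℕ) : K)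
        * α ^ (j + 1)) • (ascProd A α n * ascProd A α (m - j)))]
      simp only [Nat.choose_succ_self, Nat.zero_mul, Nat.cast_zero, zero_mul, zero_smul,
        add_zero, Nat.choose_zero_right, Nat.succ_sub_succ_eq_sub]
    rw [hS1]
    abel

/-- for every `n ≥ 0`,
`Σ_{i≥0} A_{n+i} X^i/i! = A_n · (1-αX)^{-n} · F(X)` where
`F(X) = Σ_{k≥0} A_k X^k/k!` and `A_k = ∏_{i=0}^{k-1}(A + iα·I)`. -/
theorem statement1 (α : K) (A : Matrix (Fin l) (Fin l) K) (n : ℕ) :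
    (PowerSeries.mk fun i => ((Nat.factorial i : ℚ)⁻¹) • ascProd A α (n + i))
      = PowerSeries.C (ascProd A α n) * negPow α n *
        (PowerSeries.mk fun k => ((Nat.factorial k : ℚ)⁻¹) • ascProd A α k) := by
  refine PowerSeries.ext fun m => ?_
  rw [mul_assoc, PowerSeries.coeff_mk, PowerSeries.coeff_C_mul, PowerSeries.coeff_mul]
  simp only [negPow, coeff_mk]
  rw [Finset.Nat.sum_antidiagonal_eq_sum_range_succ
    (fun j k => ((((n + j - 1).choose j : K)) * α ^ j) • (1 : Matrix (Fin l) (Fin l) K) *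
      (((k.factorial : ℚ)⁻¹) • ascProd A α k)) m]
  rw [key A α n m]
  rw [Finset.smul_sum]
  rw [Finset.mul_sum (Finset.range (m + 1))
    (fun j => ((((n + j - 1).choose j : K)) * α ^ j) • (1 : Matrix (Fin l) (Fin l) K) *
      ((((m - j).factorial : ℚ)⁻¹) • ascProd A α (m - j))) (ascProd A α n)]
  refine Finset.sum_congr rfl fun j hj => ?_
  rw [Finset.mem_range, Nat.lt_succ_iff] at hj
  have hnat : m.choose j * n.ascFactorial j * (m - j).factorial
      = (n + j - 1).choose j * m.factorial := by
    rw [Nat.ascFactorial_eq_factorial_mul_choose',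
      ← Nat.choose_mul_factorial_mul_factorial hj]
    ring
  have hq : ((m.factorial : ℚ))⁻¹ * ((m.choose j * n.ascFactorial j : ℕ) : ℚ)
      = (((n + j - 1).choose j : ℕ) : ℚ) * (((m - j).factorial : ℚ))⁻¹ := by
    have h1 : (m.factorial : ℚ) ≠ 0 := Nat.cast_ne_zero.2 m.factorial_ne_zero
    have h2 : ((m - j).factorial : ℚ) ≠ 0 := Nat.cast_ne_zero.2 (m - j).factorial_ne_zero
    field_simp
    exact_mod_cast hnat.trans (Nat.mul_comm _ _)
  rw [smul_mul_assoc, one_mul, mul_smul_comm, mul_smul_comm, mul_smul, mul_smul,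
    Nat.cast_smul_eq_nsmul K, Nat.cast_smul_eq_nsmul K,
    ← Nat.cast_smul_eq_nsmul ℚ, ← Nat.cast_smul_eq_nsmul ℚ, smul_smul,
    smul_comm (α ^ j) ((((m - j).factorial : ℚ))⁻¹) (ascProd A α n * ascProd A α (m - j)),
    smul_smul, hq]
end

section
/- Let K be a commutative ℚ-algebra, α ∈ K, A ∈ M_l(K), and let G(X) = Σ_{k≥0} ∏_{i=0}^{k-1}(A + iα·I) X^k/k! ∈ M_l(K[[X]]) (the formal series (1-αX)^{-A/α}). Then in the two-variable power series ring M_l(K[[X₁,X₂]]) one has G(X₁) · G((X₂ - X₁)·(1 - αX₁)^{-1}) = G(X₂), where (X₂-X₁)(1-αX₁)^{-1} is substituted into G (this substitution is well defined since the series has zero constant term). -/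
open Finset

variable {K : Type*} [CommRing K] [Algebra ℚ K] {l : ℕ}

/-- Build a two-variable matrix power series from its coefficients. -/
def mvMk (f : (Fin 2 →₀ ℕ) → Matrix (Fin l) (Fin l) K) :
    MvPowerSeries (Fin 2) (Matrix (Fin l) (Fin l) K) := f

/-- Substitution of a series `Y` with zero constant term into
`G(T) = Σ_{k≥0} (∏_{i=0}^{k-1}(A + iα·I)) T^k/k!`: since `Y` has zero constant
term, `coeff d (Y^k) = 0` for `k` larger than the total degree of `d`, so the
coefficient of `G(Y)` at `d` is the displayed finite sum. -/
noncomputable def Gsubst (A : Matrix (Fin l) (Fin l) K) (α : K)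
    (Y : MvPowerSeries (Fin 2) (Matrix (Fin l) (Fin l) K)) :
    MvPowerSeries (Fin 2) (Matrix (Fin l) (Fin l) K) :=
  mvMk fun d =>
    ∑ k ∈ Finset.range (d 0 + d 1 + 1),
      ((Nat.factorial k : ℚ)⁻¹ • ascProd A α k) * MvPowerSeries.coeff d (Y ^ k)

open MvPowerSeries
local notation "M" => Matrix (Fin l) (Fin l) K
local notation "S" => MvPowerSeries (Fin 2) M

lemma coeff_mvMk (f : (Fin 2 →₀ ℕ) → M) (d : Fin 2 →₀ ℕ) : coeff (R := M) d (mvMk f) = f d := rfl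

noncomputable def Dop (i : Fin 2) (f : S) : S :=
  mvMk fun d => (d i + 1) • coeff (R := M) (d + Finsupp.single i 1) f

lemma coeff_Dop (i : Fin 2) (f : S) (d : Fin 2 →₀ ℕ) :
    coeff (R := M) d (Dop i f) = (d i + 1) • coeff (R := M) (d + Finsupp.single i 1) f := rfl

theorem Dop_mul (i : Fin 2) (f g : S) :
    Dop i (f * g) = Dop i f * g + f * Dop i g := by
  classical
  refine MvPowerSeries.ext fun d => ?_
  set ε : Fin 2 →₀ ℕ := Finsupp.single i 1 with hε
  rw [map_add, coeff_Dop, coeff_mul, coeff_mul, coeff_mul, Finset.smul_sum]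
  have key : ∀ p ∈ antidiagonal (d + ε),
      (d i + 1) • (coeff (R := M) p.1 f * coeff (R := M) p.2 g)
      = p.1 i • (coeff (R := M) p.1 f * coeff (R := M) p.2 g) + p.2 i • (coeff (R := M) p.1 f * coeff (R := M) p.2 g) := by
    intro p hp
    rw [Finset.HasAntidiagonal.mem_antidiagonal] at hp
    have : p.1 i + p.2 i = d i + 1 := by
      have := congrArg (fun u => u i) hp
      simpa [Finsupp.add_apply, hε, Finsupp.single_eq_same] using this
    rw [← add_smul, this]
  rw [Finset.sum_congr rfl key, Finset.sum_add_distrib]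
  have hle_of : ∀ (u : Fin 2 →₀ ℕ), u i ≠ 0 → ε ≤ u := by
    intro u hu; rw [hε, Finsupp.single_le_iff]; omega
  congr 1
  · refine Finset.sum_bij_ne_zero (fun (p : (Fin 2 →₀ ℕ) × (Fin 2 →₀ ℕ)) _ _ => (p.1 - ε, p.2)) ?_ ?_ ?_ ?_
    · intro p h1 h2
      rw [Finset.HasAntidiagonal.mem_antidiagonal] at h1 ⊢
      have hne : p.1 i ≠ 0 := by intro h0; exact h2 (by rw [h0, zero_smul])
      have hc : p.1 - ε + ε = p.1 := tsub_add_cancel_of_le (hle_of _ hne)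
      have : (p.1 - ε + p.2) + ε = d + ε := by rw [add_right_comm, hc, h1]
      exact add_right_cancel this
    · intro p hp1 hp2 q hq1 hq2 heq
      have hnep : p.1 i ≠ 0 := by intro h0; exact hp2 (by rw [h0, zero_smul])
      have hneq : q.1 i ≠ 0 := by intro h0; exact hq2 (by rw [h0, zero_smul])
      have h1 := congrArg Prod.fst heq
      have h2 := congrArg Prod.snd heq
      simp only at h1 h2
      have : p.1 = q.1 := by
        rw [← tsub_add_cancel_of_le (hle_of _ hnep), ← tsub_add_cancel_of_le (hle_of _ hneq), h1]
      exact Prod.ext this h2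
    · intro q hq hgq
      refine ⟨(q.1 + ε, q.2), ?_, ?_, ?_⟩
      · rw [Finset.HasAntidiagonal.mem_antidiagonal] at hq ⊢
        rw [add_right_comm, hq]
      · rw [coeff_Dop, smul_mul_assoc] at hgq
        simpa [Finsupp.add_apply, hε, Finsupp.single_eq_same] using hgq
      · simp [add_tsub_cancel_right]
    · intro p hp1 hp2
      have hne : p.1 i ≠ 0 := by intro h0; exact hp2 (by rw [h0, zero_smul])
      have h1 : (p.1 - ε) i + 1 = p.1 i := by
        rw [Finsupp.tsub_apply, hε, Finsupp.single_eq_same]; omega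
      have h2 : p.1 - ε + ε = p.1 := tsub_add_cancel_of_le (hle_of _ hne)
      simp only [coeff_Dop]
      rw [smul_mul_assoc, h1, h2]
  · refine Finset.sum_bij_ne_zero (fun (p : (Fin 2 →₀ ℕ) × (Fin 2 →₀ ℕ)) _ _ => (p.1, p.2 - ε)) ?_ ?_ ?_ ?_
    · intro p h1 h2
      rw [Finset.HasAntidiagonal.mem_antidiagonal] at h1 ⊢
      have hne : p.2 i ≠ 0 := by intro h0; exact h2 (by rw [h0, zero_smul])
      have hc : p.2 - ε + ε = p.2 := tsub_add_cancel_of_le (hle_of _ hne)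
      have : (p.1 + (p.2 - ε)) + ε = d + ε := by rw [add_assoc, hc, h1]
      exact add_right_cancel this
    · intro p hp1 hp2 q hq1 hq2 heq
      have hnep : p.2 i ≠ 0 := by intro h0; exact hp2 (by rw [h0, zero_smul])
      have hneq : q.2 i ≠ 0 := by intro h0; exact hq2 (by rw [h0, zero_smul])
      have h1 := congrArg Prod.fst heq
      have h2 := congrArg Prod.snd heq
      simp only at h1 h2
      have : p.2 = q.2 := by
        rw [← tsub_add_cancel_of_le (hle_of _ hnep), ← tsub_add_cancel_of_le (hle_of _ hneq), h2]
      exact Prod.ext h1 this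
    · intro q hq hgq
      refine ⟨(q.1, q.2 + ε), ?_, ?_, ?_⟩
      · rw [Finset.HasAntidiagonal.mem_antidiagonal] at hq ⊢
        rw [← add_assoc, hq]
      · rw [coeff_Dop, mul_smul_comm] at hgq
        simpa [Finsupp.add_apply, hε, Finsupp.single_eq_same] using hgq
      · simp [add_tsub_cancel_right]
    · intro p hp1 hp2
      have hne : p.2 i ≠ 0 := by intro h0; exact hp2 (by rw [h0, zero_smul])
      have h1 : (p.2 - ε) i + 1 = p.2 i := by
        rw [Finsupp.tsub_apply, hε, Finsupp.single_eq_same]; omega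
      have h2 : p.2 - ε + ε = p.2 := tsub_add_cancel_of_le (hle_of _ hne)
      simp only [coeff_Dop]
      rw [mul_smul_comm, h1, h2]

set_option linter.unusedSectionVars false

def wtt (d : Fin 2 →₀ ℕ) : ℕ := d 0 + d 1

lemma wtt_add (u v : Fin 2 →₀ ℕ) : wtt (u + v) = wtt u + wtt v := by
  simp only [wtt, Finsupp.add_apply]; ring

lemma fin2_eq_zero {d : Fin 2 →₀ ℕ} (h : wtt d = 0) : d = 0 := by
  have h0 : d 0 = 0 ∧ d 1 = 0 := by unfold wtt at h; omega
  ext j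
  fin_cases j
  · simpa using h0.1
  · simpa using h0.2

lemma fin2_decomp (d : Fin 2 →₀ ℕ) : d = Finsupp.single 0 (d 0) + Finsupp.single 1 (d 1) := by
  ext j
  fin_cases j <;> simp

lemma coeff_pow_eq_zero {Y : S} (hY0 : coeff (R := M) 0 Y = 0) :
    ∀ (k : ℕ) (d : Fin 2 →₀ ℕ), wtt d < k → coeff (R := M) d (Y ^ k) = 0 := by
  intro k
  induction k with
  | zero => intro d h; omega
  | succ k ih =>
    intro d h
    rw [pow_succ, coeff_mul]
    apply Finset.sum_eq_zero
    intro p hp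
    rw [Finset.HasAntidiagonal.mem_antidiagonal] at hp
    have hw : wtt p.1 + wtt p.2 = wtt d := by rw [← wtt_add, hp]
    by_cases hc : wtt p.1 < k
    · rw [ih p.1 hc, zero_mul]
    · have h2 : wtt p.2 = 0 := by omega
      rw [fin2_eq_zero h2, hY0, mul_zero]

lemma coeff_pow_mul_eq_zero {Y Z : S} (hY0 : coeff (R := M) 0 Y = 0) {k : ℕ} {d : Fin 2 →₀ ℕ}
    (h : wtt d < k) : coeff (R := M) d (Y ^ k * Z) = 0 := by
  classical
  rw [coeff_mul]
  apply Finset.sum_eq_zero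
  intro p hp
  rw [Finset.HasAntidiagonal.mem_antidiagonal] at hp
  have hw : wtt p.1 + wtt p.2 = wtt d := by rw [← wtt_add, hp]
  rw [coeff_pow_eq_zero hY0 k p.1 (by omega), zero_mul]

lemma commute_smul_one (r : K) (B : M) : Commute B (r • 1) := by
  unfold Commute SemiconjBy
  rw [mul_smul_comm, smul_mul_assoc, mul_one, one_mul]

def scc (f : S) : Prop := ∀ d, ∃ r : K, coeff (R := M) d f = r • (1 : M)

lemma scc.central {f : S} (hf : scc f) (g : S) : f * g = g * f := by
  classical
  refine MvPowerSeries.ext fun d => ?_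
  rw [coeff_mul, coeff_mul]
  refine Finset.sum_nbij' (fun p => (p.2, p.1)) (fun p => (p.2, p.1)) ?_ ?_ ?_ ?_ ?_
  · intro p hp; rw [Finset.HasAntidiagonal.mem_antidiagonal] at hp ⊢; rw [add_comm, hp]
  · intro p hp; rw [Finset.HasAntidiagonal.mem_antidiagonal] at hp ⊢; rw [add_comm, hp]
  · intro p _; rfl
  · intro p _; rfl
  · intro p hp
    obtain ⟨r, hr⟩ := hf p.1
    rw [hr]
    exact (commute_smul_one r _).symm

lemma scc_one : scc (1 : S) := by
  classical
  intro d
  rw [coeff_one]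
  by_cases h : d = 0
  · exact ⟨1, by simp [h]⟩
  · exact ⟨0, by simp [h]⟩

lemma scc_monomial (n : Fin 2 →₀ ℕ) (r : K) : scc (monomial (R := M) n (r • 1)) := by
  classical
  intro d
  rw [coeff_monomial]
  by_cases h : d = n
  · exact ⟨r, by simp [h]⟩
  · exact ⟨0, by simp [h]⟩

lemma scc_X (s : Fin 2) : scc (X s : S) := by
  have : (X s : S) = monomial (R := M) (Finsupp.single s 1) ((1 : K) • 1) := by
    rw [one_smul]; rfl
  rw [this]
  exact scc_monomial _ _

lemma scc_add {f g : S} (hf : scc f) (hg : scc g) : scc (f + g) := by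
  intro d
  obtain ⟨r, hr⟩ := hf d
  obtain ⟨s, hs⟩ := hg d
  exact ⟨r + s, by rw [map_add, hr, hs, add_smul]⟩

lemma scc_neg {f : S} (hf : scc f) : scc (-f) := by
  intro d
  obtain ⟨r, hr⟩ := hf d
  exact ⟨-r, by rw [map_neg, hr, neg_smul]⟩

lemma scc_sub {f g : S} (hf : scc f) (hg : scc g) : scc (f - g) := by
  rw [sub_eq_add_neg]; exact scc_add hf (scc_neg hg)

lemma scc_mul {f g : S} (hf : scc f) (hg : scc g) : scc (f * g) := by
  classical
  intro d
  choose r hr using hf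
  choose s hs using hg
  refine ⟨∑ p ∈ antidiagonal d, r p.1 * s p.2, ?_⟩
  rw [coeff_mul, Finset.sum_smul]
  refine Finset.sum_congr rfl fun p _ => ?_
  rw [hr, hs, smul_mul_smul_comm, one_mul]

lemma scc_pow {f : S} (hf : scc f) (k : ℕ) : scc (f ^ k) := by
  induction k with
  | zero => rw [pow_zero]; exact scc_one
  | succ k ih => rw [pow_succ]; exact scc_mul ih hf

lemma Dop_add (i : Fin 2) (f g : S) : Dop i (f + g) = Dop i f + Dop i g := by
  refine MvPowerSeries.ext fun d => ?_
  rw [map_add, coeff_Dop, coeff_Dop, coeff_Dop, map_add, smul_add]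

lemma Dop_neg (i : Fin 2) (f : S) : Dop i (-f) = -(Dop i f) := by
  refine MvPowerSeries.ext fun d => ?_
  rw [map_neg, coeff_Dop, coeff_Dop, map_neg, smul_neg]

lemma Dop_sub (i : Fin 2) (f g : S) : Dop i (f - g) = Dop i f - Dop i g := by
  rw [sub_eq_add_neg, Dop_add, Dop_neg, sub_eq_add_neg]

lemma Dop_one (i : Fin 2) : Dop i (1 : S) = 0 := by
  classical
  refine MvPowerSeries.ext fun d => ?_
  rw [coeff_Dop, coeff_one, if_neg, smul_zero, map_zero]
  intro h
  have := congrArg (fun u => u i) h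
  simp [Finsupp.single_eq_same] at this

lemma Dop_monomial_of_eq_zero {i : Fin 2} {n : Fin 2 →₀ ℕ} (h : n i = 0) (b : M) :
    Dop i (monomial (R := M) n b) = 0 := by
  classical
  refine MvPowerSeries.ext fun d => ?_
  rw [coeff_Dop, coeff_monomial, if_neg, smul_zero, map_zero]
  intro hc
  have := congrArg (fun u => u i) hc
  simp [Finsupp.single_eq_same, h] at this

lemma Dop_monomial_single (i : Fin 2) (b : M) :
    Dop i (monomial (R := M) (Finsupp.single i 1) b) = C (σ := Fin 2) (R := M) b := by
  classical
  refine MvPowerSeries.ext fun d => ?_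
  rw [coeff_Dop, coeff_monomial]
  by_cases h : d = 0
  · subst h
    rw [if_pos (by simp), coeff_C, if_pos rfl]
    simp
  · rw [if_neg, coeff_C, if_neg h, smul_zero]
    intro hc
    apply h
    have : d + Finsupp.single i 1 = 0 + Finsupp.single i 1 := by rw [zero_add, hc]
    exact add_right_cancel this

lemma Dop_X_self (i : Fin 2) : Dop i (X i : S) = 1 := by
  have : (X i : S) = monomial (R := M) (Finsupp.single i 1) 1 := rfl
  rw [this, Dop_monomial_single, map_one]

lemma Dop_X_ne {i j : Fin 2} (h : j ≠ i) : Dop i (X j : S) = 0 := by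
  have : (X j : S) = monomial (R := M) (Finsupp.single j 1) 1 := rfl
  rw [this, Dop_monomial_of_eq_zero (by rw [Finsupp.single_apply, if_neg h])]

lemma Dop_pow {i : Fin 2} {Y : S} (hc : ∀ g, Y * g = g * Y) :
    ∀ k, Dop i (Y ^ (k + 1)) = (k + 1) • (Y ^ k * Dop i Y) := by
  intro k
  induction k with
  | zero => simp
  | succ k ih =>
    rw [pow_succ, Dop_mul, ih, smul_mul_assoc, mul_assoc, ← hc (Dop i Y), ← mul_assoc, ← pow_succ,
      ← succ_nsmul]

lemma C_mul_eq_mul_C {A : M} {f : S} (h : ∀ d, A * coeff (R := M) d f = coeff (R := M) d f * A) :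
    C (σ := Fin 2) (R := M) A * f = f * C (σ := Fin 2) (R := M) A := by
  refine MvPowerSeries.ext fun d => ?_
  rw [coeff_C_mul, coeff_mul_C, h]

noncomputable def Ser (c : ℕ → M) (Y : S) : S :=
  mvMk fun d => ∑ k ∈ Finset.range (wtt d + 1), c k * coeff (R := M) d (Y ^ k)

lemma coeff_Ser (c : ℕ → M) (Y : S) (d : Fin 2 →₀ ℕ) :
    coeff (R := M) d (Ser c Y) = ∑ k ∈ Finset.range (wtt d + 1), c k * coeff (R := M) d (Y ^ k) := rfl

lemma Gsubst_eq_Ser (A : M) (α : K) (Y : S) :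
    Gsubst A α Y = Ser (fun k => (Nat.factorial k : ℚ)⁻¹ • ascProd A α k) Y := rfl

lemma Ser_congr {c c' : ℕ → M} (Y : S) (h : ∀ k, c k = c' k) : Ser c Y = Ser c' Y := by
  have : c = c' := funext h
  rw [this]

lemma coeff_Ser_of_le {Y : S} (hY0 : coeff (R := M) 0 Y = 0) (c : ℕ → M) {d : Fin 2 →₀ ℕ} {N : ℕ}
    (h : wtt d ≤ N) :
    coeff (R := M) d (Ser c Y) = ∑ k ∈ Finset.range (N + 1), c k * coeff (R := M) d (Y ^ k) := by
  rw [coeff_Ser]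
  refine Finset.sum_subset (by intro x hx; simp only [Finset.mem_range] at hx ⊢; omega) ?_
  intro k _ hk
  simp only [Finset.mem_range] at hk
  rw [coeff_pow_eq_zero hY0 k d (by omega), mul_zero]

lemma Ser_sub (c c' : ℕ → M) (Y : S) :
    Ser c Y - Ser c' Y = Ser (fun k => c k - c' k) Y := by
  refine MvPowerSeries.ext fun d => ?_
  rw [map_sub, coeff_Ser, coeff_Ser, coeff_Ser, ← Finset.sum_sub_distrib]
  exact Finset.sum_congr rfl fun k _ => by rw [sub_mul]

lemma C_mul_Ser (a : M) (c : ℕ → M) (Y : S) :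
    C (σ := Fin 2) (R := M) a * Ser c Y = Ser (fun k => a * c k) Y := by
  refine MvPowerSeries.ext fun d => ?_
  rw [coeff_C_mul, coeff_Ser, coeff_Ser, Finset.mul_sum]
  exact Finset.sum_congr rfl fun k _ => by rw [mul_assoc]

lemma Ser_mul_Y {Y : S} (hY0 : coeff (R := M) 0 Y = 0) (c : ℕ → M) :
    Ser c Y * Y = Ser (fun k => Nat.casesOn k 0 fun n => c n) Y := by
  classical
  refine MvPowerSeries.ext fun d => ?_
  rw [coeff_mul, coeff_Ser]
  have step : ∀ p ∈ antidiagonal d,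
      coeff (R := M) p.1 (Ser c Y) * coeff (R := M) p.2 Y
      = ∑ k ∈ Finset.range (wtt d + 1), c k * coeff (R := M) p.1 (Y ^ k) * coeff (R := M) p.2 Y := by
    intro p hp
    rw [Finset.HasAntidiagonal.mem_antidiagonal] at hp
    have hw : wtt p.1 ≤ wtt d := by
      have := wtt_add p.1 p.2
      rw [hp] at this; omega
    rw [coeff_Ser_of_le hY0 c hw, Finset.sum_mul]
  rw [Finset.sum_congr rfl step, Finset.sum_comm]
  have inner : ∀ k ∈ Finset.range (wtt d + 1),
      ∑ p ∈ antidiagonal d, c k * coeff (R := M) p.1 (Y ^ k) * coeff (R := M) p.2 Y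
      = c k * coeff (R := M) d (Y ^ (k + 1)) := by
    intro k _
    rw [pow_succ, coeff_mul, Finset.mul_sum]
    exact Finset.sum_congr rfl fun p _ => by rw [mul_assoc]
  rw [Finset.sum_congr rfl inner, Finset.sum_range_succ, coeff_pow_eq_zero hY0 _ _ (by omega),
    mul_zero, add_zero]
  rw [Finset.sum_range_succ']
  rw [show ((Nat.casesOn 0 0 fun n => c n : M)) = 0 from rfl, zero_mul, add_zero]

lemma wtt_single_one (i : Fin 2) : wtt (Finsupp.single i 1) = 1 := by
  fin_cases i <;> simp [wtt]

lemma Dop_Ser {Y : S} (hY0 : coeff (R := M) 0 Y = 0) (hc : ∀ g, Y * g = g * Y) (i : Fin 2) (c : ℕ → M) :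
    Dop i (Ser c Y) = Ser (fun k => (k + 1) • c (k + 1)) Y * Dop i Y := by
  classical
  refine MvPowerSeries.ext fun d => ?_
  rw [coeff_Dop, coeff_Ser, wtt_add, wtt_single_one, Finset.smul_sum]
  have step1 : ∀ k ∈ Finset.range (wtt d + 1 + 1),
      (d i + 1) • (c k * coeff (R := M) (d + Finsupp.single i 1) (Y ^ k))
      = c k * coeff (R := M) d (Dop i (Y ^ k)) := by
    intro k _
    rw [coeff_Dop, mul_smul_comm]
  rw [Finset.sum_congr rfl step1, Finset.sum_range_succ']
  have h00 : c 0 * coeff (R := M) d (Dop i (Y ^ 0)) = 0 := by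
    rw [pow_zero, Dop_one, map_zero, mul_zero]
  rw [h00, add_zero]
  have step2 : ∀ k ∈ Finset.range (wtt d + 1),
      c (k + 1) * coeff (R := M) d (Dop i (Y ^ (k + 1)))
      = ((k + 1) • c (k + 1)) * coeff (R := M) d (Y ^ k * Dop i Y) := by
    intro k _
    rw [Dop_pow hc, map_nsmul, mul_smul_comm, smul_mul_assoc]
  rw [Finset.sum_congr rfl step2]
  -- now the right-hand side
  rw [coeff_mul]
  have step3 : ∀ p ∈ antidiagonal d,
      coeff (R := M) p.1 (Ser (fun k => (k + 1) • c (k + 1)) Y) * coeff (R := M) p.2 (Dop i Y)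
      = ∑ k ∈ Finset.range (wtt d + 1),
          ((k + 1) • c (k + 1)) * coeff (R := M) p.1 (Y ^ k) * coeff (R := M) p.2 (Dop i Y) := by
    intro p hp
    rw [Finset.HasAntidiagonal.mem_antidiagonal] at hp
    have hw : wtt p.1 ≤ wtt d := by
      have := wtt_add p.1 p.2; rw [hp] at this; omega
    rw [coeff_Ser_of_le hY0 _ hw, Finset.sum_mul]
  rw [Finset.sum_congr rfl step3, Finset.sum_comm]
  refine Finset.sum_congr rfl fun k _ => ?_
  rw [coeff_mul, Finset.mul_sum]
  exact Finset.sum_congr rfl fun p _ => by rw [mul_assoc]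

lemma commute_ascProd (A : M) (α : K) (k : ℕ) : Commute A (ascProd A α k) := by
  induction k with
  | zero => exact Commute.one_right A
  | succ k ih =>
    rw [ascProd]
    exact ih.mul_right ((Commute.refl A).add_right (commute_smul_one _ A))

lemma nsmul_fact (k : ℕ) (P : M) :
    (k + 1) • ((((k+1).factorial : ℚ))⁻¹ • P) = ((k.factorial : ℚ))⁻¹ • P := by
  rw [← Nat.cast_smul_eq_nsmul ℚ, smul_smul]
  congr 1
  rw [Nat.factorial_succ]
  push_cast
  rw [mul_inv]
  rw [← mul_assoc, mul_inv_cancel₀ (by positivity : ((k:ℚ)+1) ≠ 0), one_mul]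

-- e k := (k!)⁻¹ • ascProd (k+1), c k := (k!)⁻¹ • ascProd k
lemma seq_rel (A : M) (α : K) (k : ℕ) :
    (((k+1).factorial : ℚ))⁻¹ • ascProd A α (k + 2)
      - (α • (1 : M)) * (((k.factorial : ℚ))⁻¹ • ascProd A α (k + 1))
    = A * ((((k+1).factorial : ℚ))⁻¹ • ascProd A α (k + 1)) := by
  have hexp : ascProd A α (k + 2)
      = ascProd A α (k + 1) * A + (((k : K) + 1) * α) • ascProd A α (k + 1) := by
    rw [show k + 2 = (k + 1) + 1 from rfl, ascProd, mul_add, mul_smul_comm, mul_one]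
    push_cast
    ring_nf
  rw [hexp, smul_add]
  have h2 : (((k+1).factorial : ℚ))⁻¹ • ((((k : K) + 1) * α) • ascProd A α (k + 1))
      = (α • (1 : M)) * (((k.factorial : ℚ))⁻¹ • ascProd A α (k + 1)) := by
    rw [smul_mul_assoc, one_mul, mul_smul,
      show ((k : K) + 1) = (((k + 1 : ℕ) : K)) by push_cast; ring,
      Nat.cast_smul_eq_nsmul, smul_comm ((((k+1).factorial : ℚ))⁻¹) (k+1), nsmul_fact,
      smul_comm α]
  rw [h2, add_sub_cancel_right, mul_smul_comm, (commute_ascProd A α (k+1)).eq]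

lemma Rrel (A : M) (α : K) {Y : S} (hY0 : coeff (R := M) 0 Y = 0) (hc : ∀ g, Y * g = g * Y) :
    (1 - C (σ := Fin 2) (R := M) (α • 1) * Y) * Ser (fun k => ((k.factorial : ℚ))⁻¹ • ascProd A α (k+1)) Y
      = C (σ := Fin 2) (R := M) A * Ser (fun k => ((k.factorial : ℚ))⁻¹ • ascProd A α k) Y := by
  rw [sub_mul, one_mul, mul_assoc, hc (Ser _ Y), Ser_mul_Y hY0, C_mul_Ser, C_mul_Ser, Ser_sub]
  refine Ser_congr Y ?_
  intro k
  cases k with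
  | zero =>
    show (((0:ℕ).factorial : ℚ))⁻¹ • ascProd A α 1 - (α • (1:M)) * 0
        = A * ((((0:ℕ).factorial : ℚ))⁻¹ • ascProd A α 0)
    simp [ascProd]
  | succ k =>
    show (((k+1).factorial : ℚ))⁻¹ • ascProd A α (k + 2)
        - (α • (1:M)) * (((k.factorial : ℚ))⁻¹ • ascProd A α (k + 1))
      = A * ((((k+1).factorial : ℚ))⁻¹ • ascProd A α (k + 1))
    exact seq_rel A α k

lemma C_smul_mul_X (α : K) (s : Fin 2) :
    (C (σ := Fin 2) (R := M) (α • 1)) * X s = monomial (R := M) (Finsupp.single s 1) (α • 1) := by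
  rw [show (C (σ := Fin 2) (R := M) (α • (1:M))) = monomial (R := M) 0 (α • 1) from rfl, X, monomial_mul_monomial,
    zero_add, mul_one]

lemma scc_Y (α : K) {Y : S}
    (hY : Y * (1 - C (σ := Fin 2) (R := M) (α • 1) * X 0) = X 1 - X 0) : scc Y := by
  classical
  have hsXX : scc ((X 1 : S) - X 0) := scc_sub (scc_X 1) (scc_X 0)
  have hrec : ∀ d, coeff (R := M) d Y = coeff (R := M) d (X 1 - X 0 : S)
      + (if Finsupp.single 0 1 ≤ d then coeff (R := M) (d - Finsupp.single 0 1) Y * (α • 1) else 0) := by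
    intro d
    have h2 : Y = (X 1 - X 0) + Y * (C (σ := Fin 2) (R := M) (α • 1) * X 0) := by
      rw [mul_sub, mul_one] at hY
      exact sub_eq_iff_eq_add.mp hY
    conv_lhs => rw [h2]
    rw [map_add, C_smul_mul_X, coeff_mul_monomial]
  have main : ∀ n d, d 0 = n → ∃ r : K, coeff (R := M) d Y = r • (1 : M) := by
    intro n
    induction n with
    | zero =>
      intro d hd
      obtain ⟨r, hr⟩ := hsXX d
      refine ⟨r, ?_⟩
      rw [hrec d, hr, if_neg, add_zero]
      rw [Finsupp.single_le_iff, hd]; omega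
    | succ n ih =>
      intro d hd
      have hle : Finsupp.single 0 1 ≤ d := by rw [Finsupp.single_le_iff]; omega
      obtain ⟨r, hr⟩ := hsXX d
      obtain ⟨s, hs⟩ := ih (d - Finsupp.single 0 1)
        (by rw [Finsupp.tsub_apply, Finsupp.single_eq_same, hd]; omega)
      refine ⟨r + s * α, ?_⟩
      rw [hrec d, hr, if_pos hle, hs, smul_mul_smul_comm, one_mul, add_smul]
  exact fun d => main (d 0) d rfl

lemma U_mul_V (α : K) (s t : Fin 2) (hst : s ≠ t)
    (hext : ∀ d : Fin 2 →₀ ℕ, d s = 0 → d t = 0 → d = 0) :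
    (1 - C (σ := Fin 2) (R := M) (α • 1) * X s)
      * (mvMk fun d => if d t = 0 then (α ^ (d s)) • (1 : M) else 0) = 1 := by
  classical
  refine MvPowerSeries.ext fun d => ?_
  rw [sub_mul, one_mul, C_smul_mul_X, map_sub, coeff_monomial_mul, coeff_mvMk, coeff_one]
  have htsub_t : (d - (Finsupp.single s 1 : Fin 2 →₀ ℕ)) t = d t := by
    rw [Finsupp.tsub_apply, Finsupp.single_apply, if_neg hst]; omega
  by_cases ht : d t = 0
  · by_cases hs : d s = 0
    · have hd0 : d = 0 := hext d hs ht
      subst hd0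
      simp [Finsupp.single_le_iff]
    · have hle : Finsupp.single s 1 ≤ d := by rw [Finsupp.single_le_iff]; omega
      have hd0 : d ≠ 0 := fun h0 => hs (by rw [h0]; simp)
      have harg : (d - (Finsupp.single s 1 : Fin 2 →₀ ℕ)) s = d s - 1 := by
        rw [Finsupp.tsub_apply, Finsupp.single_eq_same]
      rw [if_pos ht, if_pos hle, coeff_mvMk, htsub_t, if_pos ht, harg, if_neg hd0,
        smul_mul_smul_comm, one_mul, ← pow_succ', show d s - 1 + 1 = d s by omega, sub_self]
  · have hd0 : d ≠ 0 := fun h0 => ht (by rw [h0]; simp)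
    rw [if_neg ht, if_neg hd0]
    have hzero : (if Finsupp.single s 1 ≤ d then
        (α • (1:M)) * coeff (R := M) (d - Finsupp.single s 1)
          (mvMk fun d => if d t = 0 then α ^ (d s) • (1:M) else 0) else 0) = 0 := by
      split
      · rw [coeff_mvMk, htsub_t, if_neg ht, mul_zero]
      · rfl
    rw [hzero, sub_zero]

lemma scc_geom (α : K) (s t : Fin 2) :
    scc (mvMk fun d => if d t = 0 then (α ^ (d s)) • (1 : M) else 0) := by
  intro d
  rw [coeff_mvMk]
  by_cases h : d t = 0
  · exact ⟨α ^ (d s), by rw [if_pos h]⟩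
  · exact ⟨0, by rw [if_neg h, zero_smul]⟩

lemma C_A_comm_Ser (A : M) (c : ℕ → M) (hAc : ∀ k, Commute A (c k)) {Z : S} (hZ : scc Z) :
    C (σ := Fin 2) (R := M) A * Ser c Z = Ser c Z * C (σ := Fin 2) (R := M) A := by
  apply C_mul_eq_mul_C
  intro d
  rw [coeff_Ser, Finset.mul_sum, Finset.sum_mul]
  refine Finset.sum_congr rfl fun k _ => ?_
  obtain ⟨r, hr⟩ := scc_pow hZ k d
  rw [hr, mul_smul_comm, mul_one, mul_smul_comm, smul_mul_assoc, (hAc k).eq]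

lemma nsmul_cancel {n : ℕ} {x y : M} (h : (n + 1) • x = (n + 1) • y) : x = y := by
  have h2 : ((n : ℚ) + 1) • x = ((n : ℚ) + 1) • y := by
    rw [show ((n:ℚ)+1) = ((n+1 : ℕ) : ℚ) by push_cast; ring, Nat.cast_smul_eq_nsmul,
      Nat.cast_smul_eq_nsmul]
    exact h
  exact smul_right_injective M (by positivity : ((n:ℚ)+1) ≠ 0) h2

lemma nsmul_eq_zero' {n : ℕ} {x : M} (h : (n + 1) • x = 0) : x = 0 :=
  nsmul_cancel (by rw [h, smul_zero])

lemma coeff_eq_zero_of_Dop0 {F : S} (h : Dop 0 F = 0) {d : Fin 2 →₀ ℕ} (hd : d 0 ≠ 0) :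
    coeff (R := M) d F = 0 := by
  have e := congrArg (coeff (R := M) (d - Finsupp.single 0 1)) h
  rw [coeff_Dop, LinearMap.map_zero] at e
  have hle : (Finsupp.single 0 1 : Fin 2 →₀ ℕ) ≤ d := by rw [Finsupp.single_le_iff]; omega
  rw [tsub_add_cancel_of_le hle] at e
  have hco : (d - (Finsupp.single 0 1 : Fin 2 →₀ ℕ)) 0 = d 0 - 1 := by
    rw [Finsupp.tsub_apply, Finsupp.single_eq_same]
  rw [hco, show d 0 - 1 + 1 = (d 0 - 1) + 1 from rfl] at e
  exact nsmul_eq_zero' e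

lemma single_one_sub (m : ℕ) :
    (Finsupp.single 1 (m + 1) : Fin 2 →₀ ℕ) - Finsupp.single 1 1 = Finsupp.single 1 m := by
  ext j
  rw [Finsupp.tsub_apply]
  fin_cases j <;> simp

lemma ode_coeff {a A : M} {F : S}
    (h : (1 - monomial (R := M) (Finsupp.single 1 1) a) * Dop 1 F = C (σ := Fin 2) (R := M) A * F) (n : ℕ) :
    (n + 1) • coeff (R := M) (Finsupp.single 1 (n + 1)) F
      = A * coeff (R := M) (Finsupp.single 1 n) F + n • (a * coeff (R := M) (Finsupp.single 1 n) F) := by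
  classical
  have e := congrArg (coeff (R := M) (Finsupp.single 1 n)) h
  rw [sub_mul, one_mul, map_sub, coeff_monomial_mul, coeff_C_mul, coeff_Dop] at e
  rw [Finsupp.single_eq_same, ← Finsupp.single_add] at e
  cases n with
  | zero =>
    rw [if_neg (by rw [Finsupp.single_le_iff]; simp), sub_zero] at e
    simpa using e
  | succ m =>
    rw [if_pos (by rw [Finsupp.single_le_iff, Finsupp.single_eq_same]; omega),
      single_one_sub, coeff_Dop, Finsupp.single_eq_same, ← Finsupp.single_add] at e
    rw [sub_eq_iff_eq_add] at e
    rw [e, mul_smul_comm]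

noncomputable def cSeq (A : M) (α : K) : ℕ → M := fun k => ((k.factorial : ℚ))⁻¹ • ascProd A α k
noncomputable def eSeq (A : M) (α : K) : ℕ → M :=
  fun k => ((k.factorial : ℚ))⁻¹ • ascProd A α (k + 1)

noncomputable def Vser (α : K) (s t : Fin 2) : S :=
  mvMk fun d => if d t = 0 then (α ^ (d s)) • (1 : M) else 0

lemma Gsubst_eq (A : M) (α : K) (Y : S) : Gsubst A α Y = Ser (cSeq A α) Y := rfl

lemma seq_step (A : M) (α : K) (k : ℕ) : (k + 1) • cSeq A α (k + 1) = eSeq A α k :=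
  nsmul_fact k _

lemma Rrel' (A : M) (α : K) {Y : S} (hY0 : coeff (R := M) 0 Y = 0) (hc : ∀ g, Y * g = g * Y) :
    (1 - C (σ := Fin 2) (R := M) (α • 1) * Y) * Ser (eSeq A α) Y = C (σ := Fin 2) (R := M) A * Ser (cSeq A α) Y :=
  Rrel A α hY0 hc

lemma Dop_G (A : M) (α : K) {Y : S} (hY0 : coeff (R := M) 0 Y = 0) (hc : ∀ g, Y * g = g * Y)
    (i : Fin 2) : Dop i (Ser (cSeq A α) Y) = Ser (eSeq A α) Y * Dop i Y := by
  rw [Dop_Ser hY0 hc i, Ser_congr Y (seq_step A α)]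

lemma coeff_zero_X' (s : Fin 2) : coeff (R := M) 0 (X s : S) = 0 := by
  classical
  rw [show (X s : S) = monomial (R := M) (Finsupp.single s 1) 1 from rfl]
  refine coeff_monomial_ne ?_ 1
  intro h
  have := congrArg (fun u => u s) h
  simp [Finsupp.single_eq_same] at this

lemma coeff_zero_Ser (c : ℕ → M) (Z : S) : coeff (R := M) 0 (Ser c Z) = c 0 := by
  rw [coeff_Ser, show wtt (0 : Fin 2 →₀ ℕ) = 0 by simp [wtt], Finset.sum_range_one, pow_zero,
    coeff_zero_one, mul_one]

lemma coeff_Ser_X1_ne (c : ℕ → M) {d : Fin 2 →₀ ℕ} (hd : d 0 ≠ 0) :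
    coeff (R := M) d (Ser c (X 1)) = 0 := by
  classical
  rw [coeff_Ser]
  apply Finset.sum_eq_zero
  intro k _
  rw [coeff_X_pow, if_neg, mul_zero]
  intro h
  apply hd
  rw [h, Finsupp.single_apply, if_neg (by decide)]

lemma coeff_Ser_X1 (c : ℕ → M) (n : ℕ) :
    coeff (R := M) (Finsupp.single 1 n) (Ser c (X 1)) = c n := by
  classical
  rw [coeff_Ser, show wtt (Finsupp.single 1 n : Fin 2 →₀ ℕ) = n by
    simp [wtt, Finsupp.single_apply]]
  rw [Finset.sum_eq_single n]
  · rw [coeff_X_pow, if_pos rfl, mul_one]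
  · intro k _ hk
    rw [coeff_X_pow, if_neg, mul_zero]
    intro h
    apply hk
    have := congrArg (fun u => u 1) h
    simpa [Finsupp.single_eq_same] using this.symm
  · intro h
    exact absurd (Finset.self_mem_range_succ n) h

lemma c_rec (A : M) (α : K) (n : ℕ) :
    (n + 1) • cSeq A α (n + 1)
      = A * cSeq A α n + n • ((α • (1 : M)) * cSeq A α n) := by
  rw [seq_step]
  unfold eSeq cSeq
  rw [ascProd, mul_add, smul_add]
  congr 1
  · rw [mul_smul_comm, (commute_ascProd A α n).eq]
  · rw [mul_smul_comm, mul_one, mul_smul, Nat.cast_smul_eq_nsmul,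
      smul_comm (((n.factorial : ℚ))⁻¹) n]
    congr 1
    rw [smul_mul_assoc, one_mul, smul_comm]


/-- with `G(T) = Σ_{k≥0} ∏_{i=0}^{k-1}(A + iα·I) T^k/k!` (the formal
series `(1-αT)^{-A/α}`), one has `G(X₁) · G((X₂-X₁)(1-αX₁)^{-1}) = G(X₂)` in
`M_l(K[[X₁,X₂]])`.  The substituted argument `Y = (X₂-X₁)(1-αX₁)^{-1}` is
characterized by `Y·(1-αX₁) = X₂ - X₁` (it automatically has zero constant
term). -/
theorem statement4 (α : K) (A : Matrix (Fin l) (Fin l) K)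
    (Y : MvPowerSeries (Fin 2) (Matrix (Fin l) (Fin l) K))
    (hY0 : MvPowerSeries.coeff (0 : Fin 2 →₀ ℕ) Y = 0)
    (hY : Y * (1 - MvPowerSeries.C (σ := Fin 2) (α • (1 : Matrix (Fin l) (Fin l) K)) *
            MvPowerSeries.X 0)
          = MvPowerSeries.X 1 - MvPowerSeries.X 0) :
    Gsubst A α (MvPowerSeries.X 0) * Gsubst A α Y = Gsubst A α (MvPowerSeries.X 1) := by
  classical
  have hY0' : coeff (R := M) 0 Y = 0 := hY0
  have hsY : scc Y := scc_Y α hY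
  have hcY := hsY.central
  have hsX0 : scc (X 0 : S) := scc_X 0
  have hcX0 := hsX0.central
  have hX00 : coeff (R := M) 0 (X 0 : S) = 0 := coeff_zero_X' 0
  have hsCa : scc (C (σ := Fin 2) (R := M) (α • 1)) :=
    (show C (σ := Fin 2) (R := M) (α • (1:M)) = monomial (R := M) 0 (α • 1) from rfl) ▸ scc_monomial 0 α
  have hsU : scc ((1 : S) - C (σ := Fin 2) (R := M) (α • 1) * X 0) :=
    scc_sub scc_one (scc_mul hsCa hsX0)
  have hcU := hsU.central
  have hsW : scc ((1 : S) - C (σ := Fin 2) (R := M) (α • 1) * Y) := scc_sub scc_one (scc_mul hsCa hsY)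
  have hcW := hsW.central
  have hsV : scc (Vser α 0 1 : S) := scc_geom α 0 1
  have hcV := hsV.central
  -- inverses
  have hUV : (1 - C (σ := Fin 2) (R := M) (α • 1) * X 0) * Vser α 0 1 = 1 :=
    U_mul_V α 0 1 (by decide) (fun d h0 h1 => fin2_eq_zero (by unfold wtt; omega))
  have hVU : Vser α 0 1 * (1 - C (σ := Fin 2) (R := M) (α • 1) * X 0) = 1 := by
    rw [← hcU (Vser α 0 1), hUV]
  have hWU : ((1 : S) - C (σ := Fin 2) (R := M) (α • 1) * Y) * (1 - C (σ := Fin 2) (R := M) (α • 1) * X 0)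
      = 1 - C (σ := Fin 2) (R := M) (α • 1) * X 1 := by
    rw [sub_mul, one_mul, mul_assoc, hY, mul_sub]
    abel
  -- derivatives of U
  have hDU0 : Dop 0 ((1 : S) - C (σ := Fin 2) (R := M) (α • 1) * X 0) = -(C (σ := Fin 2) (R := M) (α • 1)) := by
    rw [Dop_sub, Dop_one, C_smul_mul_X, Dop_monomial_single, zero_sub]
  have hDU1 : Dop 1 ((1 : S) - C (σ := Fin 2) (R := M) (α • 1) * X 0) = 0 := by
    rw [Dop_sub, Dop_one, C_smul_mul_X,
      Dop_monomial_of_eq_zero (by simp : (Finsupp.single (0 : Fin 2) 1) 1 = 0), sub_zero]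
  -- derivatives of Y
  have hDY1U : Dop 1 Y * (1 - C (σ := Fin 2) (R := M) (α • 1) * X 0) = 1 := by
    have h := congrArg (Dop 1) hY
    rw [Dop_mul, hDU1, mul_zero, add_zero, Dop_sub, Dop_X_self,
      Dop_X_ne (by decide : (0 : Fin 2) ≠ 1), sub_zero] at h
    exact h
  have hDY1 : Dop 1 Y = Vser α 0 1 := by
    calc Dop 1 Y = Dop 1 Y * ((1 - C (σ := Fin 2) (R := M) (α • 1) * X 0) * Vser α 0 1) := by
          rw [hUV, mul_one]
    _ = (Dop 1 Y * (1 - C (σ := Fin 2) (R := M) (α • 1) * X 0)) * Vser α 0 1 := by rw [mul_assoc]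
    _ = Vser α 0 1 := by rw [hDY1U, one_mul]
  have hDY0U : Dop 0 Y * (1 - C (σ := Fin 2) (R := M) (α • 1) * X 0)
      = C (σ := Fin 2) (R := M) (α • 1) * Y - 1 := by
    have h := congrArg (Dop 0) hY
    rw [Dop_mul, hDU0, Dop_sub, Dop_X_ne (by decide : (1 : Fin 2) ≠ 0), Dop_X_self, zero_sub,
      mul_neg, hcY (C (σ := Fin 2) (R := M) (α • 1))] at h
    have h2 := congrArg (fun z => z + C (σ := Fin 2) (R := M) (α • 1) * Y) h
    simp only [neg_add_cancel_right] at h2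
    rw [h2]
    abel
  have hDY0 : Dop 0 Y = (C (σ := Fin 2) (R := M) (α • 1) * Y - 1) * Vser α 0 1 := by
    calc Dop 0 Y = Dop 0 Y * ((1 - C (σ := Fin 2) (R := M) (α • 1) * X 0) * Vser α 0 1) := by
          rw [hUV, mul_one]
    _ = (Dop 0 Y * (1 - C (σ := Fin 2) (R := M) (α • 1) * X 0)) * Vser α 0 1 := by rw [mul_assoc]
    _ = _ := by rw [hDY0U]
  -- chain rules
  have hDG00 : Dop 0 (Ser (cSeq A α) (X 0)) = Ser (eSeq A α) (X 0) := by
    rw [Dop_G A α hX00 hcX0 0, Dop_X_self, mul_one]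
  have hDG01 : Dop 1 (Ser (cSeq A α) (X 0)) = 0 := by
    rw [Dop_G A α hX00 hcX0 1, Dop_X_ne (by decide : (0 : Fin 2) ≠ 1), mul_zero]
  have hDGY0 : Dop 0 (Ser (cSeq A α) Y) = Ser (eSeq A α) Y * Dop 0 Y := Dop_G A α hY0' hcY 0
  have hDGY1 : Dop 1 (Ser (cSeq A α) Y) = Ser (eSeq A α) Y * Dop 1 Y := Dop_G A α hY0' hcY 1
  -- Rrel instances
  have hRX0 : (1 - C (σ := Fin 2) (R := M) (α • 1) * X 0) * Ser (eSeq A α) (X 0)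
      = C (σ := Fin 2) (R := M) A * Ser (cSeq A α) (X 0) := Rrel' A α hX00 hcX0
  have hRY : ((1 : S) - C (σ := Fin 2) (R := M) (α • 1) * Y) * Ser (eSeq A α) Y
      = C (σ := Fin 2) (R := M) A * Ser (cSeq A α) Y := Rrel' A α hY0' hcY
  -- commuting C A with the G-series
  have hAc : ∀ k, Commute A (cSeq A α k) := fun k => (commute_ascProd A α k).smul_right _
  have hCAG0 : C (σ := Fin 2) (R := M) A * Ser (cSeq A α) (X 0) = Ser (cSeq A α) (X 0) * C (σ := Fin 2) (R := M) A :=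
    C_A_comm_Ser A (cSeq A α) hAc hsX0
  -- ODE in direction 0 : derivative of L vanishes
  have hE0 : Ser (eSeq A α) (X 0) = Vser α 0 1 * (C (σ := Fin 2) (R := M) A * Ser (cSeq A α) (X 0)) := by
    calc Ser (eSeq A α) (X 0)
        = (Vser α 0 1 * (1 - C (σ := Fin 2) (R := M) (α • 1) * X 0)) * Ser (eSeq A α) (X 0) := by
          rw [hVU, one_mul]
    _ = Vser α 0 1 * ((1 - C (σ := Fin 2) (R := M) (α • 1) * X 0) * Ser (eSeq A α) (X 0)) := by
          rw [mul_assoc]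
    _ = _ := by rw [hRX0]
  have hterm2 : Ser (eSeq A α) Y * ((C (σ := Fin 2) (R := M) (α • 1) * Y - 1) * Vser α 0 1)
      = -((C (σ := Fin 2) (R := M) A * Ser (cSeq A α) Y) * Vser α 0 1) := by
    rw [show C (σ := Fin 2) (R := M) (α • 1) * Y - 1 = -((1 : S) - C (σ := Fin 2) (R := M) (α • 1) * Y) from
      (neg_sub _ _).symm, neg_mul, mul_neg]
    rw [← mul_assoc, ← hcW (Ser (eSeq A α) Y), hRY]
  have hL0 : Dop 0 (Ser (cSeq A α) (X 0) * Ser (cSeq A α) Y) = 0 := by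
    rw [Dop_mul, hDG00, hDGY0, hDY0, hE0, hterm2, mul_neg]
    have t1 : (Vser α 0 1 * (C (σ := Fin 2) (R := M) A * Ser (cSeq A α) (X 0))) * Ser (cSeq A α) Y
        = ((C (σ := Fin 2) (R := M) A * Ser (cSeq A α) (X 0)) * Ser (cSeq A α) Y) * Vser α 0 1 := by
      rw [hcV (C (σ := Fin 2) (R := M) A * Ser (cSeq A α) (X 0)), mul_assoc, hcV (Ser (cSeq A α) Y),
        ← mul_assoc]
    have t2 : Ser (cSeq A α) (X 0) * ((C (σ := Fin 2) (R := M) A * Ser (cSeq A α) Y) * Vser α 0 1)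
        = ((C (σ := Fin 2) (R := M) A * Ser (cSeq A α) (X 0)) * Ser (cSeq A α) Y) * Vser α 0 1 := by
      rw [← mul_assoc, ← mul_assoc, ← hCAG0, mul_assoc (C (σ := Fin 2) (R := M) A), mul_assoc,
        mul_assoc]
    rw [t1, t2, add_neg_cancel]
  -- ODE in direction 1
  have hL1 : (1 - C (σ := Fin 2) (R := M) (α • 1) * X 1)
        * Dop 1 (Ser (cSeq A α) (X 0) * Ser (cSeq A α) Y)
      = C (σ := Fin 2) (R := M) A * (Ser (cSeq A α) (X 0) * Ser (cSeq A α) Y) := by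
    rw [Dop_mul, hDG01, zero_mul, zero_add, hDGY1, hDY1, ← hWU]
    calc ((1 - C (σ := Fin 2) (R := M) (α • 1) * Y) * (1 - C (σ := Fin 2) (R := M) (α • 1) * X 0))
          * (Ser (cSeq A α) (X 0) * (Ser (eSeq A α) Y * Vser α 0 1))
        = (1 - C (σ := Fin 2) (R := M) (α • 1) * Y)
            * ((1 - C (σ := Fin 2) (R := M) (α • 1) * X 0)
              * (Ser (cSeq A α) (X 0) * (Ser (eSeq A α) Y * Vser α 0 1))) := by
          rw [mul_assoc]
    _ = (1 - C (σ := Fin 2) (R := M) (α • 1) * Y)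
          * ((Ser (cSeq A α) (X 0) * (Ser (eSeq A α) Y * Vser α 0 1))
            * (1 - C (σ := Fin 2) (R := M) (α • 1) * X 0)) := by rw [hcU]
    _ = (1 - C (σ := Fin 2) (R := M) (α • 1) * Y) * (Ser (cSeq A α) (X 0) * Ser (eSeq A α) Y) := by
          rw [mul_assoc (Ser (cSeq A α) (X 0)), mul_assoc (Ser (eSeq A α) Y),
            hVU, mul_one]
    _ = C (σ := Fin 2) (R := M) A * (Ser (cSeq A α) (X 0) * Ser (cSeq A α) Y) := by
          rw [← mul_assoc, hcW (Ser (cSeq A α) (X 0)), mul_assoc, hRY, ← mul_assoc,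
            ← hCAG0, mul_assoc]
  -- conclude by uniqueness of solutions of the ODE
  rw [Gsubst_eq, Gsubst_eq, Gsubst_eq]
  have hL1' : (1 - monomial (R := M) (Finsupp.single 1 1) (α • 1))
        * Dop 1 (Ser (cSeq A α) (X 0) * Ser (cSeq A α) Y)
      = C (σ := Fin 2) (R := M) A * (Ser (cSeq A α) (X 0) * Ser (cSeq A α) Y) := by
    rw [← C_smul_mul_X]; exact hL1
  refine MvPowerSeries.ext fun d => ?_
  by_cases hd : d 0 = 0
  · have hdeq : d = Finsupp.single 1 (d 1) := by
      conv_lhs => rw [fin2_decomp d]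
      rw [hd, Finsupp.single_zero, zero_add]
    rw [hdeq]
    generalize d 1 = n
    induction n with
    | zero =>
      rw [Finsupp.single_zero, coeff_zero_Ser, coeff_mul, Finsupp.antidiagonal_zero,
        Finset.sum_singleton, coeff_zero_Ser, coeff_zero_Ser]
      have hc0 : cSeq A α 0 = 1 := by
        unfold cSeq; simp [ascProd]
      rw [hc0, one_mul]
    | succ n ih =>
      have e1 := ode_coeff hL1' n
      have e2 : (n + 1) • coeff (R := M) (Finsupp.single 1 (n + 1)) (Ser (cSeq A α) (X 1))
          = A * coeff (R := M) (Finsupp.single 1 n) (Ser (cSeq A α) (X 1))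
            + n • ((α • (1 : M)) * coeff (R := M) (Finsupp.single 1 n) (Ser (cSeq A α) (X 1))) := by
        rw [coeff_Ser_X1, coeff_Ser_X1]
        exact c_rec A α n
      rw [ih, ← e2] at e1
      exact nsmul_cancel e1
  · rw [coeff_Ser_X1_ne _ hd, coeff_eq_zero_of_Dop0 hL0 hd]
end

section
/- Let O be a complete discrete valuation ring with uniformizer π and residue characteristic p > 0, let α ∈ O and A ∈ M_l(O). If the sequence P_n = ∏_{i=0}^{n} (A + iα·I) converges to 0 in the π-adic topology on M_l(O), then the image of ∏_{i=0}^{p-1}(A + iα·I) in M_l(O/π) is nilpotent. -/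
open Finset Polynomial

/-- let `O` be a complete discrete valuation ring with uniformizer
`π` and residue characteristic `p > 0`, `α ∈ O`, `A ∈ M_l(O)`.  If the sequence
`P_n = ∏_{i=0}^{n}(A + iα·I)` converges to `0` π-adically (for every `k` there
is `N` with `P_n ∈ π^k·M_l(O)` for all `n ≥ N`), then the image of
`∏_{i=0}^{p-1}(A + iα·I)` in `M_l(O/π)` is nilpotent.  The products of the
pairwise commuting factors are expressed as evaluations at `A` of polynomials. -/
theorem statement11 {O : Type*} [CommRing O] [IsDomain O] [IsDiscreteValuationRing O]
    (π : O) (hπ : Irreducible π) [IsAdicComplete (Ideal.span {π}) O]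
    (p : ℕ) (hp : p.Prime) (hpπ : π ∣ (p : O))
    (α : O) {l : ℕ} (A : Matrix (Fin l) (Fin l) O)
    (hconv : ∀ k : ℕ, ∃ N : ℕ, ∀ n ≥ N, ∃ B : Matrix (Fin l) (Fin l) O,
      Polynomial.aeval A (∏ i ∈ Finset.range (n + 1),
        (Polynomial.X + Polynomial.C ((i : O) * α))) = (π ^ k) • B) :
    IsNilpotent
      ((Ideal.Quotient.mk (Ideal.span {π})).mapMatrix
        (Polynomial.aeval A (∏ i ∈ Finset.range p,
          (Polynomial.X + Polynomial.C ((i : O) * α))))) := by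
  set f := Ideal.Quotient.mk (Ideal.span {π}) with hf
  set R := O ⧸ Ideal.span {π}
  -- mapping matrices commutes with aeval
  have key : ∀ q : O[X], f.mapMatrix (Polynomial.aeval A q) =
      Polynomial.aeval (A.map f) (q.map f) := by
    have : (RingHom.mapMatrix f).comp
        ((Polynomial.aeval A : O[X] →ₐ[O] Matrix (Fin l) (Fin l) O) : O[X] →+* _)
        = ((Polynomial.aeval (A.map (f : O → R)) :
            R[X] →ₐ[R] Matrix (Fin l) (Fin l) R).toRingHom).comp
            (Polynomial.mapRingHom f) := by
      apply Polynomial.ringHom_ext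
      · intro c
        ext i j
        simp [Matrix.algebraMap_matrix_apply, apply_ite f]
      · ext i j
        simp
    intro q
    exact RingHom.congr_fun this q
  have hfπ : f π = 0 := by
    rw [hf, Ideal.Quotient.eq_zero_iff_mem]
    exact Ideal.mem_span_singleton_self π
  have hpR : ((p : ℕ) : R) = 0 := by
    have : f ((p : ℕ) : O) = 0 := by
      rw [hf, Ideal.Quotient.eq_zero_iff_mem, Ideal.mem_span_singleton]
      exact hpπ
    simpa using this
  -- periodicity of factors mod π
  have hfac : ∀ i : ℕ, (X + C ((i : O) * α)).map f = X + C ((i : R) * f α) := by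
    intro i; simp
  have hper : ∀ m : ℕ,
      (∏ i ∈ Finset.range (m * p), (X + C ((i : O) * α))).map f
        = ((∏ i ∈ Finset.range p, (X + C ((i : O) * α))).map f) ^ m := by
    intro m
    induction m with
    | zero => simp
    | succ m ih =>
      rw [Nat.succ_mul, Polynomial.map_prod, Finset.prod_range_add, pow_succ]
      rw [Polynomial.map_prod] at ih
      rw [← ih, Polynomial.map_prod]
      congr 1
      apply Finset.prod_congr rfl
      intro i _
      rw [hfac, hfac]
      congr 2
      push_cast [hpR]
      simp [Nat.cast_mul, hpR]
  obtain ⟨N, hN⟩ := hconv 1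
  set m := N + 1 with hm
  have hmp : m * p ≥ N + 1 := by
    calc m * p ≥ m * 1 := Nat.mul_le_mul_left m hp.one_lt.le
    _ = N + 1 := by rw [hm, mul_one]
  obtain ⟨B, hB⟩ := hN (m * p - 1) (by omega)
  have hn1 : m * p - 1 + 1 = m * p := by omega
  rw [hn1] at hB
  refine ⟨m, ?_⟩
  rw [key]
  rw [← map_pow, ← hper, ← key, hB]
  ext i j
  simp [hfπ]
end
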